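/- Let K be an algebraically closed field and let Φ : Kⁿ → Kⁿ be a polynomial map (each coordinate of Φ is a polynomial in n variables over K). Let V be the Zariski closure of Φⁿ(Kⁿ), the image of the n-th iterate of Φ. Then V is an irreducible closed subvariety of Kⁿ, Φ(V) ⊆ V, and Φ(V) is Zariski dense in V (i.e. the restriction Φ|_V : V → V is dominant). -/

import Mathlib

open MvPolynomial

namespace IterProof


variable {K : Type*} [Field K] {n : ℕ}

/-- Evaluating a composite of polynomial maps. -/
lemma eval_aeval' {σ τ R : Type*} [CommSemiring R] (x : τ → R)
    (Q : σ → MvPolynomial τ R) (f : MvPolynomial σ R) :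
    eval x (aeval Q f) = eval (fun i => eval x (Q i)) f := by
  rw [aeval_def, eval_eval₂]
  have h : (eval x).comp (algebraMap R (MvPolynomial τ R)) = RingHom.id R := by
    ext a; simp
  rw [h]
  exact eval₂_id _

/-- Base case: the empty family is "independent mod `J`" for any proper ideal `J`. -/
lemma base (J : Ideal (MvPolynomial (Fin n) K)) (hJ : J ≠ ⊤)
    (g : Fin 0 → MvPolynomial (Fin n) K) :
    ∀ G : MvPolynomial (Fin 0) K, aeval g G ∈ J → G = 0 := by
  intro G hG
  obtain ⟨c, rfl⟩ := MvPolynomial.C_surjective (Fin 0) G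
  rw [aeval_C] at hG
  by_cases hc : c = 0
  · rw [hc, map_zero]
  · exact absurd (J.eq_top_of_isUnit_mem hG
      ((algebraMap K _).isUnit_map (isUnit_iff_ne_zero.mpr hc))) hJ

/-- The growth step: an independent family mod `J` extends by `f ∈ J \ I` to an
independent family mod `I`, for primes `I ≤ J`. -/
lemma grow {s : ℕ} (I J : Ideal (MvPolynomial (Fin n) K)) (hI : I.IsPrime)
    (hIJ : I ≤ J) (f : MvPolynomial (Fin n) K) (hfJ : f ∈ J) (hfI : f ∉ I)
    (g : Fin s → MvPolynomial (Fin n) K)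
    (hg : ∀ G : MvPolynomial (Fin s) K, aeval g G ∈ J → G = 0) :
    ∀ G : MvPolynomial (Fin (s+1)) K, aeval (Fin.cons f g) G ∈ I → G = 0 := by
  set E : Polynomial (MvPolynomial (Fin s) K) →+* MvPolynomial (Fin n) K :=
    Polynomial.eval₂RingHom ((aeval g : MvPolynomial (Fin s) K →ₐ[K] _) :
      MvPolynomial (Fin s) K →+* MvPolynomial (Fin n) K) f with hE
  have compat : ∀ G : MvPolynomial (Fin (s+1)) K,
      aeval (Fin.cons f g) G = E (finSuccEquiv K s G) := by
    have h := MvPolynomial.ringHom_ext (σ := Fin (s+1)) (R := K)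
      (f := (aeval (Fin.cons f g) : MvPolynomial (Fin (s+1)) K →ₐ[K] _).toRingHom)
      (g := E.comp ((finSuccEquiv K s : MvPolynomial (Fin (s+1)) K ≃ₐ[K] _) :
        MvPolynomial (Fin (s+1)) K →+* Polynomial (MvPolynomial (Fin s) K)))
      ?_ ?_
    · intro G; exact RingHom.congr_fun h G
    · intro a
      simp [hE, finSuccEquiv_apply]
    · intro i
      refine Fin.cases ?_ ?_ i
      · simp [hE, finSuccEquiv_X_zero]
      · intro j
        simp [hE, finSuccEquiv_X_succ]
  -- main induction on polynomial degree
  have main : ∀ N (q : Polynomial (MvPolynomial (Fin s) K)), q.natDegree ≤ N →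
      E q ∈ I → q = 0 := by
    intro N
    induction N with
    | zero =>
      intro q hq hEq
      have hqC : q = Polynomial.C (q.coeff 0) := Polynomial.eq_C_of_natDegree_le_zero hq
      have : aeval g (q.coeff 0) ∈ J := by
        have : E q = aeval g (q.coeff 0) := by rw [hqC]; simp [hE]
        exact this ▸ hIJ hEq
      have := hg _ this
      rw [hqC, this, map_zero]
    | succ N ih =>
      intro q hq hEq
      have hdecomp : q.divX * Polynomial.X + Polynomial.C (q.coeff 0) = q :=
        Polynomial.divX_mul_X_add q
      have hEX : E Polynomial.X = f := Polynomial.eval₂_X _ _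
      have hEC : ∀ c, E (Polynomial.C c) = aeval g c := fun c => Polynomial.eval₂_C _ _
      have hEdecomp : E q = E q.divX * f + aeval g (q.coeff 0) := by
        conv_lhs => rw [← hdecomp]
        rw [map_add, map_mul, hEX, hEC]
      have hc0 : q.coeff 0 = 0 := by
        apply hg
        have : aeval g (q.coeff 0) = E q - E q.divX * f := by rw [hEdecomp]; ring
        rw [this]
        exact J.sub_mem (hIJ hEq) (J.mul_mem_left _ hfJ)
      have hqX : q = q.divX * Polynomial.X := by
        conv_lhs => rw [← hdecomp]
        rw [hc0, map_zero, add_zero]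
      have hdivX : E q.divX ∈ I := by
        have hmul : E q.divX * f ∈ I := by
          rw [hqX, map_mul, hEX] at hEq; exact hEq
        rcases hI.mem_or_mem hmul with h | h
        · exact h
        · exact absurd h hfI
      have hdeg : q.divX.natDegree ≤ N := by
        have := Polynomial.natDegree_divX_eq_natDegree_tsub_one (p := q)
        omega
      rw [hqX, ih _ hdeg hdivX, zero_mul]
  intro G hG
  have : finSuccEquiv K s G = 0 := by
    apply main (finSuccEquiv K s G).natDegree _ le_rfl
    rw [← compat]; exact hG
  have := congrArg (finSuccEquiv K s).symm this
  simpa using this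



variable {K : Type*} [Field K] {n : ℕ}

/-- There is no algebraically independent family of `n+1` elements in a polynomial
ring in `n` variables over a field: proved by counting monomials of bounded degree. -/
lemma no_indep (b : Fin (n+1) → MvPolynomial (Fin n) K)
    (hb : ∀ G : MvPolynomial (Fin (n+1)) K, aeval b G = 0 → G = 0) : False := by
  classical
  set D : ℕ := (Finset.univ.sup fun i : Fin (n+1) => (b i).totalDegree) + 1 with hD
  have hDb : ∀ i, (b i).totalDegree ≤ D := by
    intro i; rw [hD]; exact Nat.le_succ_of_le (Finset.le_sup (f := fun i => (b i).totalDegree) (Finset.mem_univ i))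
  set c : ℕ := (n+1) * D + 1 with hc
  set t : ℕ := c ^ n with ht
  have htpos : 1 ≤ t := Nat.one_le_pow _ _ (by positivity)
  set N : ℕ := (n+1) * (t * D) with hN
  -- injectivity of `aeval b`
  have hinj : Function.Injective (aeval b : MvPolynomial (Fin (n+1)) K →ₐ[K] MvPolynomial (Fin n) K) := by
    rw [injective_iff_map_eq_zero]
    exact hb
  -- the family of monomial images
  set toF : (Fin (n+1) → Fin (t+1)) → (Fin (n+1) →₀ ℕ) :=
    fun e => Finsupp.equivFunOnFinite.symm (fun i => (e i : ℕ)) with htoF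
  have htoF_inj : Function.Injective toF := by
    intro e₁ e₂ h
    funext i
    have := congrArg (fun (s : Fin (n+1) →₀ ℕ) => s i) h
    simp only [htoF, Finsupp.coe_equivFunOnFinite_symm] at this
    exact Fin.ext this
  set Fam : (Fin (n+1) → Fin (t+1)) → MvPolynomial (Fin n) K :=
    fun e => aeval b (monomial (toF e) (1 : K)) with hFam
  have lin1 : LinearIndependent K (fun e => (monomial (toF e) (1 : K) : MvPolynomial (Fin (n+1)) K)) := by
    have h := (MvPolynomial.basisMonomials (Fin (n+1)) K).linearIndependent.comp toF htoF_inj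
    simp only [coe_basisMonomials] at h
    exact h
  have lin2 : LinearIndependent K Fam := by
    have h := lin1.map' (aeval b : MvPolynomial (Fin (n+1)) K →ₐ[K] MvPolynomial (Fin n) K).toLinearMap
      (LinearMap.ker_eq_bot.mpr hinj)
    exact h
  -- each member has total degree at most N
  have hmem : ∀ e, Fam e ∈ restrictTotalDegree (Fin n) K N := by
    intro e
    rw [mem_restrictTotalDegree]
    have h1 : Fam e = ∏ i, b i ^ ((toF e) i) := by
      rw [hFam]
      simp only [aeval_monomial, map_one, one_mul]
      exact Finsupp.prod_fintype _ _ (fun i => pow_zero _)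
    rw [h1]
    calc (∏ i, b i ^ ((toF e) i)).totalDegree
        ≤ ∑ i, (b i ^ ((toF e) i)).totalDegree := totalDegree_finset_prod _ _
      _ ≤ ∑ _i : Fin (n+1), t * D := by
          apply Finset.sum_le_sum
          intro i _
          refine le_trans (totalDegree_pow _ _) ?_
          have he : (toF e) i ≤ t := by
            simp only [htoF, Finsupp.coe_equivFunOnFinite_symm]
            exact Fin.is_le _
          exact Nat.mul_le_mul he (hDb i)
      _ = (n+1) * (t * D) := by simp [Finset.sum_const, Finset.card_univ]
  -- the coefficient-extraction linear map
  set toF' : (Fin n → Fin (N+1)) → (Fin n →₀ ℕ) :=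
    fun e => Finsupp.equivFunOnFinite.symm (fun i => (e i : ℕ)) with htoF'
  set T : MvPolynomial (Fin n) K →ₗ[K] ((Fin n → Fin (N+1)) → K) :=
    LinearMap.pi (fun e => lcoeff K (toF' e)) with hT
  have hker : ∀ p ∈ restrictTotalDegree (Fin n) K N, T p = 0 → p = 0 := by
    intro p hp hTp
    ext s
    rw [coeff_zero]
    by_contra hcoef
    have hs : s ∈ p.support := mem_support_iff.mpr hcoef
    have hsum : (s.sum fun _ x => x) ≤ N :=
      le_trans (le_totalDegree hs) ((mem_restrictTotalDegree _ _ _).mp hp)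
    have hsi : ∀ i, s i ≤ N := by
      intro i
      by_cases h0 : s i = 0
      · omega
      · refine le_trans ?_ hsum
        have : s i ≤ ∑ a ∈ s.support, s a :=
          Finset.single_le_sum (fun a _ => Nat.zero_le _) (Finsupp.mem_support_iff.mpr h0)
        exact this
    set e : Fin n → Fin (N+1) := fun i => ⟨s i, Nat.lt_succ_of_le (hsi i)⟩ with he
    have he' : toF' e = s := by
      have h1 : (fun i => ((e i : ℕ))) = ⇑s := by funext i; simp [he]
      show Finsupp.equivFunOnFinite.symm (fun i => ((e i : ℕ))) = s
      rw [h1]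
      exact Finsupp.equivFunOnFinite.symm_apply_apply s
    have : T p e = coeff s p := by simp [hT, lcoeff, he']
    rw [hTp] at this
    exact hcoef (by simpa using this.symm)
  have hdisj : Disjoint (Submodule.span K (Set.range Fam)) (LinearMap.ker T) := by
    rw [Submodule.disjoint_def]
    intro x hx hk
    have hx' : x ∈ restrictTotalDegree (Fin n) K N := by
      refine Submodule.span_le.mpr ?_ hx
      rintro y ⟨e, rfl⟩
      exact hmem e
    exact hker x hx' (LinearMap.mem_ker.mp hk)
  have lin3 : LinearIndependent K (T ∘ Fam) := lin2.map hdisj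
  have hcard := lin3.fintype_card_le_finrank
  rw [Module.finrank_pi K] at hcard
  have hcard1 : Fintype.card (Fin (n+1) → Fin (t+1)) = (t+1)^(n+1) := by
    simp [Fintype.card_fun]
  have hcard2 : Fintype.card (Fin n → Fin (N+1)) = (N+1)^n := by
    simp [Fintype.card_fun]
  rw [hcard1, hcard2] at hcard
  -- arithmetic contradiction
  have h2 : N + 1 ≤ c * t := by
    have : (n+1) * (t * D) + 1 ≤ (n+1) * D * t + t := by
      have : (n+1) * (t * D) = (n+1) * D * t := by ring
      omega
    calc N + 1 = (n+1) * (t * D) + 1 := rfl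
      _ ≤ (n+1) * D * t + t := this
      _ = c * t := by rw [hc]; ring
  have h3 : (N+1)^n ≤ (c*t)^n := Nat.pow_le_pow_left h2 n
  have h4 : (c*t)^n = t^(n+1) := by
    rw [mul_pow, ← ht, pow_succ, mul_comm]
  have h5 : t^(n+1) < (t+1)^(n+1) :=
    Nat.pow_lt_pow_left (Nat.lt_succ_self t) (Nat.succ_ne_zero n)
  omega



/-- `vanishingIdeal` of the range of a polynomial map is the kernel of substitution. -/
lemma vi_range_eq_ker [Infinite K] (g : (Fin n → K) → (Fin n → K))
    (Q : Fin n → MvPolynomial (Fin n) K) (hQ : ∀ v i, g v i = eval v (Q i)) :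
    vanishingIdeal K (Set.range g) =
      RingHom.ker ((aeval Q : MvPolynomial (Fin n) K →ₐ[K] MvPolynomial (Fin n) K) :
        MvPolynomial (Fin n) K →+* MvPolynomial (Fin n) K) := by
  ext f
  rw [mem_vanishingIdeal_iff, RingHom.mem_ker]
  simp only [MvPolynomial.aeval_eq_eval]
  have key : ∀ v, eval v (aeval Q f) = eval (g v) f := by
    intro v
    rw [eval_aeval']
    have h1 : (fun i => eval v (Q i)) = g v := by funext i; exact (hQ v i).symm
    rw [h1]
  constructor
  · intro h
    apply MvPolynomial.funext
    intro v
    show eval v (aeval Q f) = eval v 0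
    rw [key v, map_zero]
    exact h _ ⟨v, rfl⟩
  · rintro h x ⟨v, rfl⟩
    have h' : aeval Q f = 0 := h
    rw [← key v, h', map_zero]

/-- Pulling back the vanishing ideal of an image. -/
lemma vi_image (P : Fin n → MvPolynomial (Fin n) K) (Φ : (Fin n → K) → (Fin n → K))
    (hΦ : ∀ v i, Φ v i = eval v (P i)) (S : Set (Fin n → K)) :
    vanishingIdeal K (Φ '' S) =
      Ideal.comap ((aeval P : MvPolynomial (Fin n) K →ₐ[K] MvPolynomial (Fin n) K) :
        MvPolynomial (Fin n) K →+* MvPolynomial (Fin n) K) (vanishingIdeal K S) := by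
  ext f
  rw [mem_vanishingIdeal_iff, Ideal.mem_comap, mem_vanishingIdeal_iff]
  simp only [MvPolynomial.aeval_eq_eval]
  have key : ∀ x, eval x (aeval P f) = eval (Φ x) f := by
    intro x
    rw [eval_aeval']
    have h1 : (fun i => eval x (P i)) = Φ x := by funext i; exact (hΦ x i).symm
    rw [h1]
  constructor
  · intro h x hx
    show eval x (aeval P f) = 0
    rw [key x]
    exact h _ ⟨x, hx, rfl⟩
  · rintro h y ⟨x, hx, rfl⟩
    rw [← key x]
    exact h x hx





/-- A strictly increasing chain of primes `⊥ = I 0 < I 1 < ⋯ < I (n+1)` in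
`K[x₁,…,xₙ]` is impossible. -/
lemma chain_false (I : ℕ → Ideal (MvPolynomial (Fin n) K))
    (hprime : ∀ k, (I k).IsPrime)
    (hmono : ∀ k, I k ≤ I (k+1))
    (hne : ∀ k ≤ n, I k ≠ I (k+1))
    (hbot : I 0 = ⊥) : False := by
  have key : ∀ m, m ≤ n + 1 → ∃ g : Fin m → MvPolynomial (Fin n) K,
      ∀ G : MvPolynomial (Fin m) K, aeval g G ∈ I (n + 1 - m) → G = 0 := by
    intro m
    induction m with
    | zero =>
      intro _
      exact ⟨fun _ => 0, base _ (hprime _).ne_top _⟩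
    | succ m ih =>
      intro hm
      obtain ⟨g, hg⟩ := ih (le_trans (Nat.le_succ m) hm)
      have hk : (n + 1 - (m+1)) + 1 = n + 1 - m := by omega
      have hle : I (n + 1 - (m+1)) ≤ I (n + 1 - m) := by
        have := hmono (n + 1 - (m+1))
        rwa [hk] at this
      have hneq : I (n + 1 - (m+1)) ≠ I (n + 1 - m) := by
        have := hne (n + 1 - (m+1)) (by omega)
        rwa [hk] at this
    -- get a separating element
      obtain ⟨f, hfJ, hfI⟩ : ∃ f, f ∈ I (n + 1 - m) ∧ f ∉ I (n + 1 - (m+1)) := by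
        by_contra h
        push_neg at h
        exact hneq (le_antisymm hle (fun x hx => h x hx))
      exact ⟨Fin.cons f g, grow _ _ (hprime _) hle f hfJ hfI g hg⟩
  obtain ⟨g, hg⟩ := key (n+1) le_rfl
  have h0 : n + 1 - (n+1) = 0 := by omega
  apply no_indep g
  intro G hG
  apply hg
  rw [h0, hbot]
  simpa using hG


end IterProof

/-- Let `K` be an algebraically closed field and `Φ : Kⁿ → Kⁿ` a polynomial map, with
coordinates given by the polynomials `P i`. Let `V` be the Zariski closure of the image of the
`n`-th iterate `Φⁿ`. Then `V` is irreducible (its vanishing ideal is prime), `Φ(V) ⊆ V`,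
and `Φ(V)` is Zariski dense in `V` (`Φ|_V` is dominant). -/
theorem closure_image_iterate_irreducible_and_dominant
    {K : Type*} [Field K] [IsAlgClosed K] (n : ℕ)
    (P : Fin n → MvPolynomial (Fin n) K) (Φ : (Fin n → K) → (Fin n → K))
    (hΦ : ∀ v i, Φ v i = MvPolynomial.eval v (P i)) :
    (vanishingIdeal K (zeroLocus K (vanishingIdeal K (Set.range (Φ^[n]))))).IsPrime ∧
    Φ '' zeroLocus K (vanishingIdeal K (Set.range (Φ^[n]))) ⊆
      zeroLocus K (vanishingIdeal K (Set.range (Φ^[n]))) ∧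
    zeroLocus K (vanishingIdeal K (Φ '' zeroLocus K (vanishingIdeal K (Set.range (Φ^[n]))))) =
      zeroLocus K (vanishingIdeal K (Set.range (Φ^[n]))) := by
  classical
  -- polynomials computing the iterates
  have hQex : ∀ k : ℕ, ∃ Q : Fin n → MvPolynomial (Fin n) K,
      ∀ v i, Φ^[k] v i = MvPolynomial.eval v (Q i) := by
    intro k
    induction k with
    | zero => exact ⟨fun i => MvPolynomial.X i, by simp⟩
    | succ k ih =>
      obtain ⟨Q, hQ⟩ := ih
      refine ⟨fun i => MvPolynomial.aeval Q (P i), ?_⟩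
      intro v i
      rw [Function.iterate_succ_apply', hΦ, IterProof.eval_aeval']
      have h1 : (fun j => MvPolynomial.eval v (Q j)) = Φ^[k] v := by
        funext j; exact (hQ v j).symm
      rw [h1]
  obtain ⟨I, hIdef⟩ : ∃ I : ℕ → Ideal (MvPolynomial (Fin n) K),
      ∀ k, I k = vanishingIdeal K (Set.range (Φ^[k])) := ⟨_, fun _ => rfl⟩
  have hprime : ∀ k, (I k).IsPrime := by
    intro k
    obtain ⟨Q, hQ⟩ := hQex k
    rw [hIdef, IterProof.vi_range_eq_ker (Φ^[k]) Q hQ]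
    exact RingHom.ker_isPrime _
  have hsucc : ∀ k, I (k+1) =
      Ideal.comap ((MvPolynomial.aeval P :
          MvPolynomial (Fin n) K →ₐ[K] MvPolynomial (Fin n) K) :
        MvPolynomial (Fin n) K →+* MvPolynomial (Fin n) K) (I k) := by
    intro k
    rw [hIdef, hIdef, ← IterProof.vi_image P Φ hΦ]
    congr 1
    rw [Function.iterate_succ' Φ k, Set.range_comp]
  have hmono : ∀ k, I k ≤ I (k+1) := by
    intro k
    rw [hIdef, hIdef]
    apply vanishingIdeal_anti_mono
    rintro x ⟨v, rfl⟩
    exact ⟨Φ v, (Function.iterate_succ_apply Φ k v).symm⟩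
  have hbot : I 0 = ⊥ := by
    rw [hIdef]
    ext f
    rw [mem_vanishingIdeal_iff, Ideal.mem_bot]
    constructor
    · intro h
      apply MvPolynomial.funext
      intro v
      rw [map_zero]
      exact h v ⟨v, by simp⟩
    · rintro rfl x _
      rw [map_zero]
  have hstab : I n = I (n+1) := by
    by_contra hne
    have hne' : ∀ k ≤ n, I k ≠ I (k+1) := by
      intro k hk h
      apply hne
      have step : ∀ j, I j = I (j+1) → I (j+1) = I (j+2) := by
        intro j hj
        rw [hsucc (j+1), ← hj, ← hsucc j]
        exact hj
      have hall : ∀ d, I (k + d) = I (k + d + 1) := by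
        intro d
        induction d with
        | zero => simpa using h
        | succ d ih => exact step _ ih
      have := hall (n - k)
      rwa [Nat.add_sub_cancel' hk] at this
    exact IterProof.chain_false I hprime hmono hne' hbot
  have hVI : vanishingIdeal K (zeroLocus K (vanishingIdeal K (Set.range (Φ^[n])))) =
      vanishingIdeal K (Set.range (Φ^[n])) :=
    le_antisymm (vanishingIdeal_anti_mono (zeroLocus_vanishingIdeal_le _))
      (le_vanishingIdeal_zeroLocus _)
  refine ⟨?_, ?_, ?_⟩
  · rw [hVI, ← hIdef n]
    exact hprime n
  · rintro y ⟨x, hx, rfl⟩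
    intro p hp
    have h1 : MvPolynomial.aeval P p ∈ vanishingIdeal K (Set.range (Φ^[n])) := by
      have h2 : p ∈ I (n+1) := by rw [← hstab, hIdef n]; exact hp
      rw [hsucc n, Ideal.mem_comap] at h2
      rw [← hIdef n]
      exact h2
    have h2 := hx _ h1
    have key : MvPolynomial.eval (Φ x) p = MvPolynomial.eval x (MvPolynomial.aeval P p) := by
      rw [IterProof.eval_aeval']
      have h3 : (fun i => MvPolynomial.eval x (P i)) = Φ x := by
        funext i; exact (hΦ x i).symm
      rw [h3]
    show MvPolynomial.eval (Φ x) p = 0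
    rw [key]
    exact h2
  · have h3 : vanishingIdeal K (Φ '' zeroLocus K (vanishingIdeal K (Set.range (Φ^[n])))) =
        vanishingIdeal K (Set.range (Φ^[n])) := by
      rw [IterProof.vi_image P Φ hΦ, hVI, ← hIdef n, ← hsucc n, ← hstab, hIdef n]
    rw [h3]
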